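/- Let C̃ = {(x, |x·log|x||) : x ∈ ℝ} ∪ {(0,0)} ⊆ ℝ². Then the germ (C̃, 0) is not bi-Lipschitz homeomorphic to (ℝ, 0): there is no homeomorphism F between neighborhoods of 0 in C̃ and in ℝ with F(0) = 0 and (1/c)‖p−q‖ ≤ |F(p)−F(q)| ≤ c‖p−q‖ for some c > 0. -/

import Mathlib

open Metric

/-- The curve `C̃ = {(x, |x log|x||)} ⊆ ℝ²`. -/
noncomputable def Ctilde : Set (ℝ × ℝ) := {p | p.2 = |p.1 * Real.log (abs p.1)|}

/-- Elementary bound: `|x log|x|| ≤ 2√|x|` for `|x| < 1`. -/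
lemma ctilde_aux_bound {x : ℝ} (hx : |x| < 1) : |x * Real.log (abs x)| ≤ 2 * Real.sqrt |x| := by
  rcases (abs_nonneg x).eq_or_lt with h | h
  · have hx0 : x = 0 := abs_eq_zero.1 h.symm
    simp [hx0]
  · set y := |x| with hy
    have hs : 0 < Real.sqrt y := Real.sqrt_pos.2 h
    have h1 : Real.log (Real.sqrt y)⁻¹ ≤ (Real.sqrt y)⁻¹ - 1 :=
      Real.log_le_sub_one_of_pos (by positivity)
    rw [Real.log_inv, Real.log_sqrt h.le] at h1
    have hneg : Real.log y < 0 := Real.log_neg h hx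
    have habs : |x * Real.log y| = y * (-Real.log y) := by
      rw [abs_mul, ← hy, abs_of_neg hneg]
    have hyy : Real.sqrt y * Real.sqrt y = y := Real.mul_self_sqrt h.le
    have hinv : Real.sqrt y * (Real.sqrt y)⁻¹ = 1 := mul_inv_cancel₀ hs.ne'
    rw [habs]
    nlinarith [mul_le_mul_of_nonneg_left h1 (le_of_lt (mul_pos h hs))]

lemma ctilde_sign_aux {a b u v : ℝ} (h1 : 0 < a * u) (h2 : 0 < b * v) (h3 : u * v < 0) :
    a * b < 0 := by
  nlinarith [mul_pos h1 h2]

set_option maxHeartbeats 1000000 in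
/-- The germ at `0` of the graph `C̃ = {(x, |x log|x||)}` is not bi-Lipschitz
homeomorphic to `(ℝ, 0)`. -/
theorem Ctilde_not_biLipschitz_to_line :
    ¬ ∃ (U : Set (ℝ × ℝ)) (V : Set ℝ) (F : ℝ × ℝ → ℝ) (c : ℝ),
        IsOpen U ∧ IsOpen V ∧ ((0, 0) : ℝ × ℝ) ∈ U ∧ (0 : ℝ) ∈ V ∧ 0 < c ∧
        F (0, 0) = 0 ∧ Set.BijOn F (Ctilde ∩ U) V ∧
        ∀ p ∈ Ctilde ∩ U, ∀ q ∈ Ctilde ∩ U,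
          (1 / c) * ‖p - q‖ ≤ |F p - F q| ∧ |F p - F q| ≤ c * ‖p - q‖ := by
  rintro ⟨U, V, F, c, hU, hV, h0U, h0V, hc, hF0, hbij, hlip⟩
  classical
  set f : ℝ → ℝ := fun x => |x * Real.log (abs x)| with hfdef
  have hf0 : f 0 = 0 := by simp [hfdef]
  have hfnn : ∀ x, 0 ≤ f x := fun x => abs_nonneg _
  have hfeven : ∀ x, f (-x) = f x := by
    intro x
    simp only [hfdef, abs_neg, neg_mul, abs_neg]
  have hmemC : ∀ x : ℝ, (x, f x) ∈ Ctilde := fun x => by simp [Ctilde, hfdef]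
  have h00C : ((0, 0) : ℝ × ℝ) ∈ Ctilde := by simp [Ctilde]
  have h00 : ((0, 0) : ℝ × ℝ) ∈ Ctilde ∩ U := ⟨h00C, h0U⟩
  have hnormmk : ∀ a b : ℝ, ‖((a, b) : ℝ × ℝ)‖ = max |a| |b| := by
    intro a b; simp [Prod.norm_def, Real.norm_eq_abs]
  -- choose ε with ball ⊆ U
  obtain ⟨ε, hε, hball⟩ := Metric.isOpen_iff.1 hU (0, 0) h0U
  -- choose x₀
  set x₀ : ℝ := min (ε ^ 2 / 16) (min (ε / 2) (1 / 2)) with hx₀def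
  have hx₀pos : 0 < x₀ := lt_min (by positivity) (lt_min (by linarith) (by norm_num))
  have hx₀lt1 : x₀ < 1 :=
    lt_of_le_of_lt ((min_le_right _ _).trans (min_le_right _ _)) (by norm_num)
  have hmemU : ∀ x : ℝ, |x| ≤ x₀ → (x, f x) ∈ U := by
    intro x hx
    apply hball
    have h1 : |x| < 1 := lt_of_le_of_lt hx hx₀lt1
    have h2 : f x ≤ 2 * Real.sqrt |x| := ctilde_aux_bound h1
    have h3 : Real.sqrt |x| ≤ Real.sqrt (ε ^ 2 / 16) :=
      Real.sqrt_le_sqrt (hx.trans (min_le_left _ _))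
    have h4 : Real.sqrt (ε ^ 2 / 16) = ε / 4 := by
      rw [show ε ^ 2 / 16 = (ε / 4) ^ 2 by ring, Real.sqrt_sq (by positivity)]
    have h5 : |x| ≤ ε / 2 := hx.trans ((min_le_right _ _).trans (min_le_left _ _))
    rw [Metric.mem_ball, dist_eq_norm]
    have : ((x, f x) : ℝ × ℝ) - (0, 0) = (x, f x) := by simp
    rw [this, hnormmk]
    have hfx0 : 0 ≤ f x := hfnn x
    rw [abs_of_nonneg hfx0] at *
    apply max_lt <;> nlinarith [h3, h4, h2]
  have hmem : ∀ x : ℝ, |x| ≤ x₀ → (x, f x) ∈ Ctilde ∩ U := fun x hx => ⟨hmemC x, hmemU x hx⟩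
  set g : ℝ → ℝ := fun x => F (x, f x) with hgdef
  have hg0 : g 0 = 0 := by
    show F (0, f 0) = 0
    rw [hf0]; exact hF0
  have hgne : ∀ t : ℝ, t ≠ 0 → |t| ≤ x₀ → g t ≠ 0 := by
    intro t ht hle h
    have heq : F (t, f t) = F (0, 0) := by rw [hF0]; exact h
    have := hbij.2.1 (hmem t hle) h00 heq
    exact ht (congrArg Prod.fst this)
  -- continuity
  have hFc : ContinuousOn F (Ctilde ∩ U) := by
    apply LipschitzOnWith.continuousOn (K := c.toNNReal)
    rw [lipschitzOnWith_iff_dist_le_mul]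
    intro p hp q hq
    rw [Real.dist_eq, dist_eq_norm, Real.coe_toNNReal c hc.le]
    exact (hlip p hp q hq).2
  have hφc : ContinuousOn (fun x : ℝ => ((x, f x) : ℝ × ℝ)) {x : ℝ | x ≠ 0} := by
    apply ContinuousOn.prodMk continuousOn_id
    apply continuous_abs.comp_continuousOn
    apply ContinuousOn.mul continuousOn_id
    apply Real.continuousOn_log.comp continuous_abs.continuousOn
    intro x hx
    simpa using hx
  have hgc : ∀ s t : ℝ, (0 : ℝ) ∉ Set.Icc s t → -x₀ ≤ s → t ≤ x₀ →
      ContinuousOn g (Set.Icc s t) := by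
    intro s t h0 hs ht
    apply hFc.comp (hφc.mono ?_) ?_
    · intro u hu h
      exact h0 (h ▸ hu)
    · intro u hu
      exact hmem u (abs_le.2 ⟨hs.trans hu.1, hu.2.trans ht⟩)
  -- constant sign on each branch
  have hsame : ∀ s t : ℝ, ((0 < s ∧ 0 < t) ∨ (s < 0 ∧ t < 0)) → |s| ≤ x₀ → |t| ≤ x₀ →
      0 < g s * g t := by
    have key : ∀ a b : ℝ, a ≤ b → ((0 < a ∧ 0 < b) ∨ (a < 0 ∧ b < 0)) → |a| ≤ x₀ → |b| ≤ x₀ →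
        0 < g a * g b := by
      intro a b hab hcase ha hb
      have h0 : (0 : ℝ) ∉ Set.Icc a b := by
        rcases hcase with ⟨h1, _⟩ | ⟨_, h2⟩
        · exact fun h => absurd h.1 (not_le.2 h1)
        · exact fun h => absurd h.2 (not_le.2 h2)
      have hcont := hgc a b h0 ((abs_le.1 ha).1) (le_of_abs_le hb)
      have hmemu : ∀ u ∈ Set.Icc a b, u ≠ 0 ∧ |u| ≤ x₀ := by
        intro u hu
        exact ⟨fun h => h0 (h ▸ hu),
          abs_le.2 ⟨(abs_le.1 ha).1.trans hu.1, hu.2.trans (le_of_abs_le hb)⟩⟩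
      have hga : g a ≠ 0 := hgne a (hmemu a (Set.left_mem_Icc.2 hab)).1 ha
      have hgb : g b ≠ 0 := hgne b (hmemu b (Set.right_mem_Icc.2 hab)).1 hb
      rcases hga.lt_or_gt with hlt | hgt
      · rcases hgb.lt_or_gt with hlt' | hgt'
        · exact mul_pos_of_neg_of_neg hlt hlt'
        · obtain ⟨u, hu, hu0⟩ := intermediate_value_Icc hab hcont ⟨hlt.le, hgt'.le⟩
          exact absurd hu0 (hgne u (hmemu u hu).1 (hmemu u hu).2)
      · rcases hgb.lt_or_gt with hlt' | hgt'
        · obtain ⟨u, hu, hu0⟩ := intermediate_value_Icc' hab hcont ⟨hlt'.le, hgt.le⟩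
          exact absurd hu0 (hgne u (hmemu u hu).1 (hmemu u hu).2)
        · exact mul_pos hgt hgt'
    intro s t hst hs ht
    rcases le_total s t with h | h
    · exact key s t h hst hs ht
    · rw [mul_comm]
      exact key t s h (by tauto) ht hs
  -- small values of V are attained at small parameters
  have hval : ∀ y : ℝ, y ∈ V → c * |y| < x₀ → y ≠ 0 → ∃ t : ℝ, t ≠ 0 ∧ |t| ≤ x₀ ∧ g t = y := by
    intro y hy hsmall hy0
    obtain ⟨p, hp, hFp⟩ := hbij.2.2 hy
    have hlow := (hlip p hp (0, 0) h00).1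
    rw [hFp, hF0, sub_zero] at hlow
    have hps : p - ((0, 0) : ℝ × ℝ) = p := by simp
    rw [hps] at hlow
    have hnorm : ‖p‖ ≤ c * |y| := by
      rw [one_div] at hlow
      calc ‖p‖ = c * (c⁻¹ * ‖p‖) := by field_simp
        _ ≤ c * |y| := by nlinarith [hlow]
    have hp1 : |p.1| ≤ x₀ := by
      have h1 : |p.1| ≤ ‖p‖ := by
        rw [Prod.norm_def, Real.norm_eq_abs]
        exact le_max_left _ _
      linarith
    have hpfst : p = (p.1, f p.1) := by
      have := hp.1
      exact Prod.ext rfl this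
    refine ⟨p.1, ?_, hp1, ?_⟩
    · intro h
      apply hy0
      rw [← hFp, hpfst, h, hf0, hF0]
    · rw [hgdef]
      simp only
      rw [← hpfst, hFp]
    -- done
  -- two preimages with opposite signs
  obtain ⟨δ, hδ, hballV⟩ := Metric.isOpen_iff.1 hV 0 h0V
  set y₀ : ℝ := min (δ / 2) (x₀ / (2 * c)) with hy₀def
  have hy₀pos : 0 < y₀ := lt_min (by linarith) (by positivity)
  have hy₀δ : y₀ < δ := lt_of_le_of_lt (min_le_left _ _) (by linarith)
  have hy₀x : c * y₀ < x₀ := by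
    have h1 : y₀ ≤ x₀ / (2 * c) := min_le_right _ _
    have h2 : c * y₀ ≤ c * (x₀ / (2 * c)) := by nlinarith
    have h3 : c * (x₀ / (2 * c)) = x₀ / 2 := by field_simp
    linarith
  have hy₀V : y₀ ∈ V := by
    apply hballV
    rw [Metric.mem_ball, Real.dist_eq, sub_zero, abs_of_pos hy₀pos]
    exact hy₀δ
  have hy₀V' : -y₀ ∈ V := by
    apply hballV
    rw [Metric.mem_ball, Real.dist_eq, sub_zero, abs_neg, abs_of_pos hy₀pos]
    exact hy₀δ
  obtain ⟨t₁, ht₁0, ht₁le, hgt₁⟩ := hval y₀ hy₀V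
    (by rw [abs_of_pos hy₀pos]; exact hy₀x) hy₀pos.ne'
  obtain ⟨t₂, ht₂0, ht₂le, hgt₂⟩ := hval (-y₀) hy₀V'
    (by rw [abs_neg, abs_of_pos hy₀pos]; exact hy₀x) (neg_ne_zero.2 hy₀pos.ne')
  have hprod : g t₁ * g t₂ < 0 := by
    rw [hgt₁, hgt₂]; nlinarith
  -- pick the small x
  set x : ℝ := min x₀ (Real.exp (-(c ^ 2 + 1))) with hxdef
  have hxpos : 0 < x := lt_min hx₀pos (Real.exp_pos _)
  have hxx₀ : x ≤ x₀ := min_le_left _ _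
  have hxabs : |x| ≤ x₀ := by rw [abs_of_pos hxpos]; exact hxx₀
  have hmxabs : |(-x)| ≤ x₀ := by rw [abs_neg]; exact hxabs
  have hlogx : Real.log x ≤ -(c ^ 2 + 1) :=
    (Real.log_le_iff_le_exp hxpos).2 (min_le_right _ _)
  have hlogneg : Real.log x < 0 := lt_of_le_of_lt hlogx (by nlinarith)
  have hfx : f x = x * (-Real.log x) := by
    rw [hfdef]
    simp only
    rw [abs_of_pos hxpos, abs_of_neg (mul_neg_of_pos_of_neg hxpos hlogneg)]
    ring
  have hfxge : x * (c ^ 2 + 1) ≤ f x := by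
    rw [hfx]; nlinarith
  -- opposite signs of g x and g (-x)
  have hC : g x * g (-x) < 0 := by
    rcases ht₁0.lt_or_gt with h1 | h1 <;> rcases ht₂0.lt_or_gt with h2 | h2
    · exact absurd (hsame t₁ t₂ (Or.inr ⟨h1, h2⟩) ht₁le ht₂le) (by linarith)
    · -- t₁ < 0 < t₂ : g on positive side has sign of g t₂, negative side sign of g t₁
      have hA : 0 < g x * g t₂ := hsame x t₂ (Or.inl ⟨hxpos, h2⟩) hxabs ht₂le
      have hB : 0 < g (-x) * g t₁ := hsame (-x) t₁ (Or.inr ⟨neg_neg_of_pos hxpos, h1⟩) hmxabs ht₁le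
      have := ctilde_sign_aux hA hB (by rw [mul_comm]; exact hprod)
      linarith
    · have hA : 0 < g x * g t₁ := hsame x t₁ (Or.inl ⟨hxpos, h1⟩) hxabs ht₁le
      have hB : 0 < g (-x) * g t₂ := hsame (-x) t₂ (Or.inr ⟨neg_neg_of_pos hxpos, h2⟩) hmxabs ht₂le
      have := ctilde_sign_aux hA hB hprod
      linarith
    · exact absurd (hsame t₁ t₂ (Or.inl ⟨h1, h2⟩) ht₁le ht₂le) (by linarith)
  -- Lipschitz estimates
  have hxmem := hmem x hxabs
  have hmxmem : ((-x, f x) : ℝ × ℝ) ∈ Ctilde ∩ U := by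
    rw [← hfeven x]; exact hmem (-x) hmxabs
  have hup := (hlip (x, f x) hxmem ((-x, f x)) hmxmem).2
  have hsub : ((x, f x) : ℝ × ℝ) - (-x, f x) = (2 * x, 0) := by
    rw [Prod.mk_sub_mk, sub_self, sub_neg_eq_add, two_mul]
  rw [hsub, hnormmk] at hup
  have hnormval : max |2 * x| |(0 : ℝ)| = 2 * x := by
    rw [abs_zero, abs_of_pos (by linarith)]
    exact max_eq_left (by linarith)
  rw [hnormval] at hup
  -- lower bounds on |g x|, |g (-x)|
  have hlow1 := (hlip (x, f x) hxmem (0, 0) h00).1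
  have hlow2 := (hlip ((-x, f x)) hmxmem (0, 0) h00).1
  rw [hF0, sub_zero] at hlow1 hlow2
  have hsub1 : ((x, f x) : ℝ × ℝ) - (0, 0) = (x, f x) := by simp
  have hsub2 : ((-x, f x) : ℝ × ℝ) - (0, 0) = (-x, f x) := by simp
  rw [hsub1, hnormmk] at hlow1
  rw [hsub2, hnormmk] at hlow2
  have hfle1 : f x ≤ max |x| (f x) := by
    rw [abs_of_nonneg (hfnn x)] at *
    exact le_max_right _ _
  have hfle2 : f x ≤ max |(-x)| (f x) := by
    rw [abs_of_nonneg (hfnn x)] at *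
    exact le_max_right _ _
  have hcinv : 0 < 1 / c := by positivity
  have hlow1' : (1 / c) * f x ≤ |F (x, f x)| := by
    refine le_trans ?_ hlow1
    rw [abs_of_nonneg (hfnn x)]
    nlinarith [le_max_right |x| |f x|, abs_nonneg (f x)]
  have hlow2' : (1 / c) * f x ≤ |F (-x, f x)| := by
    refine le_trans ?_ hlow2
    rw [abs_of_nonneg (hfnn x)]
    nlinarith [le_max_right |(-x)| |f x|, abs_nonneg (f x)]
  -- opposite signs give |F p - F q| = |F p| + |F q|
  have hgx : g x = F (x, f x) := rfl
  have hgmx : g (-x) = F (-x, f x) := by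
    show F (-x, f (-x)) = F (-x, f x)
    rw [hfeven]
  have habssum : |F (x, f x)| + |F (-x, f x)| ≤ |F (x, f x) - F (-x, f x)| := by
    rw [← hgx, ← hgmx]
    rcases lt_or_ge 0 (g x) with h | h
    · have h2 : g (-x) < 0 := by nlinarith
      rw [abs_of_pos h, abs_of_neg h2, abs_of_pos (by linarith)]
      linarith
    · have h1 : g x < 0 := by
        rcases h.lt_or_eq with h' | h'
        · exact h'
        · exact absurd h' (hgne x hxpos.ne' hxabs)
      have h2 : 0 < g (-x) := by nlinarith
      rw [abs_of_neg h1, abs_of_pos h2, abs_of_neg (by linarith)]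
      linarith
  -- final contradiction : x*(c²+1) ≤ f x ≤ c² x
  have hfinal : f x ≤ c ^ 2 * x := by
    have h1 : (1 / c) * f x + (1 / c) * f x ≤ c * (2 * x) := by
      calc (1 / c) * f x + (1 / c) * f x ≤ |F (x, f x)| + |F (-x, f x)| := by linarith
        _ ≤ |F (x, f x) - F (-x, f x)| := habssum
        _ ≤ c * (2 * x) := hup
    have h2 : (1 / c) * f x + (1 / c) * f x = (2 / c) * f x := by ring
    rw [h2] at h1
    have h3 := mul_le_mul_of_nonneg_left h1 (le_of_lt hc)
    have h4 : c * ((2 / c) * f x) = 2 * f x := by field_simp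
    nlinarith
  nlinarith [hfxge, hfinal, hxpos]
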